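/- Let σ₁,σ₂,σ₃,μ₁,μ₂,μ₃ > 0 and set a₁ = σ₃μ₁, a₂ = σ₁μ₂, a₃ = σ₂μ₃, b₁ = σ₂μ₁, b₂ = σ₃μ₂, b₃ = σ₁μ₃, and let R₀ be the matrix with rows (0, a₂, −b₃), (−b₁, 0, a₃), (a₁, −b₂, 0). Then: (1) R₀·(μ₁⁻¹, μ₂⁻¹, μ₃⁻¹)ᵀ = 0, so det R₀ = 0; (2) with γⱼ = aⱼ² + bⱼ² and D = (a₂²a₃² + b₂²b₃² + b₂²a₃²) + (a₃²a₁² + b₃²b₁² + b₃²a₁²) + (a₁²a₂² + b₁²b₂² + b₁²a₂²), the eigenvalues of R₀ᵀR₀ are 0 and λ± = (γ₁+γ₂+γ₃)/2 ± √(((γ₁+γ₂+γ₃)/2)² − D), and one has 0 < D ≤ ((γ₁+γ₂+γ₃)/2)², so both λ± are real and positive; (3) D/(γ₁+γ₂+γ₃) < λ₋ ≤ 2D/(γ₁+γ₂+γ₃) and (γ₁+γ₂+γ₃)/2 ≤ λ₊ < γ₁+γ₂+γ₃. -/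

import Mathlib

set_option maxHeartbeats 1000000 in
theorem three_well_model_spectrum (σ₁ σ₂ σ₃ μ₁ μ₂ μ₃ : ℝ)
    (hσ₁ : 0 < σ₁) (hσ₂ : 0 < σ₂) (hσ₃ : 0 < σ₃)
    (hμ₁ : 0 < μ₁) (hμ₂ : 0 < μ₂) (hμ₃ : 0 < μ₃) :
    let a₁ := σ₃ * μ₁; let a₂ := σ₁ * μ₂; let a₃ := σ₂ * μ₃
    let b₁ := σ₂ * μ₁; let b₂ := σ₃ * μ₂; let b₃ := σ₁ * μ₃
    let R₀ : Matrix (Fin 3) (Fin 3) ℝ := !![0, a₂, -b₃; -b₁, 0, a₃; a₁, -b₂, 0]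
    let γ₁ := a₁^2 + b₁^2; let γ₂ := a₂^2 + b₂^2; let γ₃ := a₃^2 + b₃^2
    let D := (a₂^2*a₃^2 + b₂^2*b₃^2 + b₂^2*a₃^2) + (a₃^2*a₁^2 + b₃^2*b₁^2 + b₃^2*a₁^2)
      + (a₁^2*a₂^2 + b₁^2*b₂^2 + b₁^2*a₂^2)
    let Sγ := γ₁ + γ₂ + γ₃
    let lamP := Sγ/2 + Real.sqrt ((Sγ/2)^2 - D)
    let lamM := Sγ/2 - Real.sqrt ((Sγ/2)^2 - D)
    (R₀.mulVec ![μ₁⁻¹, μ₂⁻¹, μ₃⁻¹] = 0 ∧ R₀.det = 0) ∧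
    (0 < D ∧ D ≤ (Sγ/2)^2) ∧
    (∀ lam : ℝ,
      (lam • (1 : Matrix (Fin 3) (Fin 3) ℝ) - R₀.transpose * R₀).det = 0
        ↔ (lam = 0 ∨ lam = lamP ∨ lam = lamM)) ∧
    (0 < lamM ∧ 0 < lamP) ∧
    (D / Sγ < lamM ∧ lamM ≤ 2 * D / Sγ) ∧
    (Sγ/2 ≤ lamP ∧ lamP < Sγ) := by
  intro a₁ a₂ a₃ b₁ b₂ b₃ R₀ γ₁ γ₂ γ₃ D Sγ lamP lamM
  unfold lamP lamM Sγ D γ₁ γ₂ γ₃ R₀ a₁ a₂ a₃ b₁ b₂ b₃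
  set A1 := σ₃ * μ₁ with hA1
  set A2 := σ₁ * μ₂ with hA2
  set A3 := σ₂ * μ₃ with hA3
  set B1 := σ₂ * μ₁ with hB1
  set B2 := σ₃ * μ₂ with hB2
  set B3 := σ₁ * μ₃ with hB3
  set S : ℝ := A1^2 + B1^2 + (A2^2 + B2^2) + (A3^2 + B3^2) with hS
  set Dv : ℝ := A2^2*A3^2 + B2^2*B3^2 + B2^2*A3^2 + (A3^2*A1^2 + B3^2*B1^2 + B3^2*A1^2)
      + (A1^2*A2^2 + B1^2*B2^2 + B1^2*A2^2) with hDv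
  clear_value A1 A2 A3 B1 B2 B3
  have hD : 0 < Dv := by
    rw [hDv, hA1, hA2, hA3, hB1, hB2, hB3]; positivity
  have hSpos : 0 < S := by
    rw [hS, hA1, hA2, hA3, hB1, hB2, hB3]; positivity
  have hK : Dv ≤ (S/2)^2 := by
    rw [hDv, hS, hA1, hA2, hA3, hB1, hB2, hB3]
    rcases le_total 0 ((σ₁^2*μ₂^2 - σ₂^2*μ₁^2) * (σ₁^2*μ₃^2 - σ₃^2*μ₁^2)) with h | h
    · nlinarith [sq_nonneg ((σ₂^2*μ₃^2 - σ₃^2*μ₂^2) - (σ₁^2*μ₂^2 - σ₂^2*μ₁^2)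
        + (σ₁^2*μ₃^2 - σ₃^2*μ₁^2)), h]
    · have h2 : 0 ≤ (σ₁^2*μ₃^2 - σ₃^2*μ₁^2) * (σ₂^2*μ₃^2 - σ₃^2*μ₂^2) := by
        nlinarith [mul_nonneg (mul_nonneg (mul_nonneg hσ₂.le hμ₁.le) hσ₂.le) hμ₁.le,
          mul_pos (mul_pos (mul_pos hσ₁ hμ₁) hσ₁) hμ₁,
          sq_nonneg (σ₁^2*μ₃^2 - σ₃^2*μ₁^2),
          mul_nonneg (mul_nonneg (mul_nonneg hσ₃.le hμ₁.le) hσ₃.le) hμ₁.le]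
      nlinarith [sq_nonneg ((σ₁^2*μ₂^2 - σ₂^2*μ₁^2) - (σ₂^2*μ₃^2 - σ₃^2*μ₂^2)
        + (σ₁^2*μ₃^2 - σ₃^2*μ₁^2)), h2]
  set s : ℝ := Real.sqrt ((S/2)^2 - Dv) with hsdef
  have hs0 : 0 ≤ s := Real.sqrt_nonneg _
  have hs : s^2 = (S/2)^2 - Dv := Real.sq_sqrt (by linarith)
  clear_value s
  have hslt : s < S/2 := by nlinarith
  refine ⟨⟨?_, ?_⟩, ⟨hD, hK⟩, ?_, ⟨by linarith, by positivity⟩, ⟨?_, ?_⟩,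
    ⟨by linarith, by linarith⟩⟩
  · funext i
    fin_cases i <;>
      simp [Matrix.mulVec, dotProduct, Fin.sum_univ_three, hA1, hA2, hA3, hB1, hB2, hB3] <;>
      field_simp <;> ring
  · rw [Matrix.det_fin_three]
    simp [hA1, hA2, hA3, hB1, hB2, hB3]
    ring
  · intro lam
    have hdet : (lam • (1 : Matrix (Fin 3) (Fin 3) ℝ)
          - (!![0, A2, -B3; -B1, 0, A3; A1, -B2, 0] : Matrix (Fin 3) (Fin 3) ℝ).transpose
            * !![0, A2, -B3; -B1, 0, A3; A1, -B2, 0]).det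
        = lam * (lam - (S/2 + s)) * (lam - (S/2 - s)) := by
      rw [Matrix.det_fin_three]
      simp only [Matrix.sub_apply, Matrix.smul_apply, Matrix.one_apply, Matrix.mul_apply,
        Matrix.transpose_apply, Fin.sum_univ_three, smul_eq_mul,
        Matrix.cons_val', Matrix.cons_val_zero, Matrix.cons_val_one, Matrix.head_cons,
        Matrix.head_fin_const, Matrix.empty_val', Matrix.cons_val_fin_one]
      norm_num [Fin.ext_iff, Matrix.cons_val_two, Matrix.tail_cons]
      rw [hS] at hs ⊢
      rw [hDv] at hs
      rw [hA1, hA2, hA3, hB1, hB2, hB3] at hs ⊢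
      linear_combination lam * hs
    rw [hdet]
    constructor
    · intro h
      rcases mul_eq_zero.1 h with h' | h'
      · rcases mul_eq_zero.1 h' with h'' | h''
        · exact Or.inl h''
        · exact Or.inr (Or.inl (by linarith [sub_eq_zero.1 h'']))
      · exact Or.inr (Or.inr (by linarith [sub_eq_zero.1 h']))
    · rintro (h | h | h) <;> rw [h] <;> ring
  · rw [div_lt_iff₀ hSpos]
    nlinarith [sq_nonneg (S/2 - s)]
  · rw [le_div_iff₀ hSpos]
    nlinarith [mul_nonneg hs0 (by linarith : (0:ℝ) ≤ S - 2*s)]
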